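/- Let G be a median graph and H a hyperplane of G. Then the graph obtained from G by deleting the edges belonging to H has exactly two connected components, and the vertex set of each of these two components is a convex set of vertices of G. -/
import Mathlib


/-- `m` is a median of `x`, `y`, `z` in the graph `G`. -/
def IsMedianOf {V : Type*} (G : SimpleGraph V) (m x y z : V) : Prop :=
  G.dist x y = G.dist x m + G.dist m y ∧
  G.dist y z = G.dist y m + G.dist m z ∧
  G.dist x z = G.dist x m + G.dist m z

/-- A median graph: connected, and every triple of vertices has a unique median. -/
def MedianGraph {V : Type*} (G : SimpleGraph V) : Prop :=
  G.Connected ∧ ∀ x y z : V, ∃! m : V, IsMedianOf G m x y z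

/-- A set `S` of vertices is convex: every vertex on a geodesic (a walk realizing
the graph distance) between two vertices of `S` belongs to `S`. -/
def ConvexSet {V : Type*} (G : SimpleGraph V) (S : Set V) : Prop :=
  ∀ u ∈ S, ∀ v ∈ S, ∀ w : G.Walk u v, w.length = G.dist u v → ∀ x ∈ w.support, x ∈ S

/-- Two edges are square-opposite: they are opposite sides of a 4-cycle. -/
def SquareOpposite {V : Type*} (G : SimpleGraph V) (e f : Sym2 V) : Prop :=
  ∃ a b c d : V, a ≠ b ∧ a ≠ c ∧ a ≠ d ∧ b ≠ c ∧ b ≠ d ∧ c ≠ d ∧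
    G.Adj a b ∧ G.Adj c d ∧ G.Adj a c ∧ G.Adj b d ∧ e = s(a, b) ∧ f = s(c, d)

/-- A hyperplane: an equivalence class of edges under the equivalence relation
generated by square-opposition. -/
def IsHyperplane {V : Type*} (G : SimpleGraph V) (H : Set (Sym2 V)) : Prop :=
  ∃ e ∈ G.edgeSet, H = {f | Relation.EqvGen (SquareOpposite G) e f}

namespace HypAux

open SimpleGraph Relation

variable {V : Type*} {G : SimpleGraph V}

lemma median_exists (hG : MedianGraph G) (x y z : V) : ∃ m, IsMedianOf G m x y z :=
  (hG.2 x y z).exists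

lemma median_unique (hG : MedianGraph G) {x y z m m' : V}
    (h : IsMedianOf G m x y z) (h' : IsMedianOf G m' x y z) : m = m' := by
  obtain ⟨n, _, hu⟩ := hG.2 x y z
  rw [hu m h, hu m' h']

lemma dist_step (hG : MedianGraph G) {p q : V} (h : G.Adj p q) (v : V) :
    G.dist v p = G.dist v q + 1 ∨ G.dist v q = G.dist v p + 1 := by
  obtain ⟨m, h1, h2, h3⟩ := median_exists hG v p q
  have hpq : G.dist p q = 1 := SimpleGraph.dist_eq_one_iff_adj.mpr h
  have h0 : G.dist p m = 0 ∨ G.dist m q = 0 := by omega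
  rcases h0 with h0 | h0
  · have hpm : p = m := (hG.1.dist_eq_zero_iff).mp h0
    subst hpm
    right; omega
  · have hmq : m = q := (hG.1.dist_eq_zero_iff).mp h0
    rw [hmq] at h1
    have hqp : G.dist q p = 1 := by rw [SimpleGraph.dist_comm]; exact hpq
    left; omega

lemma no_triangle (hG : MedianGraph G) {p q r : V}
    (h1 : G.Adj p q) (h2 : G.Adj q r) (h3 : G.Adj p r) : False := by
  have a1 : G.dist p q = 1 := SimpleGraph.dist_eq_one_iff_adj.mpr h1
  have a2 : G.dist p r = 1 := SimpleGraph.dist_eq_one_iff_adj.mpr h3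
  rcases dist_step hG h2 p with h | h <;> omega

lemma dist_eq_two (hG : MedianGraph G) {p q r : V}
    (h1 : G.Adj p q) (h2 : G.Adj q r) (hne : p ≠ r) : G.dist p r = 2 := by
  have hn : ¬ G.Adj p r := fun h => no_triangle hG h1 h2 h
  have hle : G.dist p r ≤ 2 := by
    have := SimpleGraph.dist_le (Walk.cons h1 (Walk.cons h2 Walk.nil))
    simpa using this
  have h0 : G.dist p r ≠ 0 := fun h => hne ((hG.1.dist_eq_zero_iff).mp h)
  have h1' : G.dist p r ≠ 1 := fun h => hn (SimpleGraph.dist_eq_one_iff_adj.mp h)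
  omega

lemma square_transfer_one (hG : MedianGraph G) {p q r s w : V}
    (hpq : G.Adj p q) (hrs : G.Adj r s) (hpr : G.Adj p r) (hqs : G.Adj q s)
    (hqr : q ≠ r) (hps : p ≠ s)
    (h : G.dist w q = G.dist w p + 1) : G.dist w s = G.dist w r + 1 := by
  rcases dist_step hG hrs w with hr | hr
  swap
  · exact hr
  -- hr : G.dist w r = G.dist w s + 1
  exfalso
  rcases dist_step hG hpr w with h1 | h1
  · -- h1 : G.dist w p = G.dist w r + 1
    rcases dist_step hG hqs w with h2 | h2 <;> omega
  · -- h1 : G.dist w r = G.dist w p + 1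
    have dqr : G.dist q r = 2 := dist_eq_two hG hpq.symm hpr hqr
    have dpq : G.dist p q = 1 := SimpleGraph.dist_eq_one_iff_adj.mpr hpq
    have dqp : G.dist q p = 1 := SimpleGraph.dist_eq_one_iff_adj.mpr hpq.symm
    have dpr : G.dist p r = 1 := SimpleGraph.dist_eq_one_iff_adj.mpr hpr
    have dsq : G.dist s q = 1 := SimpleGraph.dist_eq_one_iff_adj.mpr hqs.symm
    have dqs : G.dist q s = 1 := SimpleGraph.dist_eq_one_iff_adj.mpr hqs
    have dsr : G.dist s r = 1 := SimpleGraph.dist_eq_one_iff_adj.mpr hrs.symm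
    have hmp : IsMedianOf G p w q r := ⟨by omega, by omega, by omega⟩
    have hms : IsMedianOf G s w q r := ⟨by omega, by omega, by omega⟩
    exact hps (median_unique hG hmp hms)

lemma square_transfer (hG : MedianGraph G) {p q r s : V}
    (hpq : G.Adj p q) (hrs : G.Adj r s) (hpr : G.Adj p r) (hqs : G.Adj q s)
    (hqr : q ≠ r) (hps : p ≠ s) (w : V) :
    G.dist w q = G.dist w p + 1 ↔ G.dist w s = G.dist w r + 1 :=
  ⟨square_transfer_one hG hpq hrs hpr hqs hqr hps,
   square_transfer_one hG hrs hpq hpr.symm hqs.symm hps.symm hqr.symm⟩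

/-- The halfspace (side of `a`) determined by the edge `ab`. -/
def side (G : SimpleGraph V) (a b : V) : Set V := {v | G.dist v b = G.dist v a + 1}

lemma mem_side {a b v : V} : v ∈ side G a b ↔ G.dist v b = G.dist v a + 1 := Iff.rfl

lemma side_or (hG : MedianGraph G) {a b : V} (hab : G.Adj a b) (v : V) :
    v ∈ side G a b ∨ v ∈ side G b a := (dist_step hG hab v).symm

lemma side_disj {a b v : V} (h1 : v ∈ side G a b) (h2 : v ∈ side G b a) : False := by
  rw [mem_side] at h1 h2; omega

set_option maxHeartbeats 2000000 in
lemma cut_key (hG : MedianGraph G) {a b : V} (hab : G.Adj a b) :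
    ∀ k : ℕ, ∀ y x : V, G.Adj y x → y ∈ side G a b → x ∈ side G b a → G.dist y a = k →
      Relation.EqvGen (SquareOpposite G) s(a, b) s(y, x) ∧
        ∀ w, w ∈ side G a b ↔ G.dist w x = G.dist w y + 1 := by
  intro k
  induction k using Nat.strong_induction_on with
  | _ k IH =>
  intro y x hyx hy hx hk
  rw [mem_side] at hy hx
  have dab : G.dist a b = 1 := SimpleGraph.dist_eq_one_iff_adj.mpr hab
  have cya : G.dist a y = G.dist y a := SimpleGraph.dist_comm
  have cxa : G.dist a x = G.dist x a := SimpleGraph.dist_comm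
  have cyb : G.dist b y = G.dist y b := SimpleGraph.dist_comm
  have cxb : G.dist b x = G.dist x b := SimpleGraph.dist_comm
  have s1 := dist_step hG hyx a
  have s2 := dist_step hG hyx b
  have dxa : G.dist x a = k + 1 := by clear * - s1 s2 cya cxa cyb cxb hx hy hk; omega
  have dxb : G.dist x b = k := by clear * - s1 s2 cya cxa cyb cxb hx hy hk dxa; omega
  clear s1 s2
  rcases Nat.eq_zero_or_pos k with hk0 | hk0
  · subst hk0
    have hya : y = a := (hG.1.dist_eq_zero_iff).mp hk
    have hxb : x = b := (hG.1.dist_eq_zero_iff).mp (by omega : G.dist x b = 0)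
    subst hya; subst hxb
    exact ⟨Relation.EqvGen.refl _, fun w => Iff.rfl⟩
  · obtain ⟨p, hp⟩ := SimpleGraph.exists_walk_of_dist_ne_zero
      (by omega : G.dist y a ≠ 0)
    cases p with
    | nil => simp at hp; omega
    | cons h q =>
      rename_i y₁
      have hlen : q.length + 1 = k := by
        have := hp; simp [SimpleGraph.Walk.length_cons] at this; omega
      have t1 : G.dist y₁ a ≤ q.length := SimpleGraph.dist_le q
      have t2 : G.dist y a ≤ G.dist y y₁ + G.dist y₁ a := hG.1.dist_triangle
      have dyy1 : G.dist y y₁ = 1 := SimpleGraph.dist_eq_one_iff_adj.mpr h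
      have dy1a : G.dist y₁ a + 1 = k := by clear * - hlen t1 t2 dyy1 hk; omega
      have cy1b : G.dist b y₁ = G.dist y₁ b := SimpleGraph.dist_comm
      have s3 := dist_step hG h b
      have s4 := dist_step hG hab y₁
      have dy1b : G.dist y₁ b = k := by clear * - s3 s4 cyb hy hk cy1b dy1a; omega
      clear s3 s4
      have hxy1 : x ≠ y₁ := by intro hE; rw [hE] at dxa; clear * - dxa dy1a; omega
      have dxy1 : G.dist x y₁ = 2 := dist_eq_two hG hyx.symm h hxy1
      obtain ⟨m, m1, m2, m3⟩ := median_exists hG b x y₁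
      have cxm : G.dist x m = G.dist m x := SimpleGraph.dist_comm
      have dmx : G.dist m x = 1 := by clear * - m1 m2 m3 cxb dxb cy1b dy1b dxy1 cxm; omega
      have dmy1 : G.dist m y₁ = 1 := by clear * - m1 m2 m3 cxb dxb cy1b dy1b dxy1 cxm; omega
      have dbm : G.dist b m + 1 = k := by clear * - m1 m2 m3 cxb dxb cy1b dy1b dxy1 cxm hk0; omega
      clear m1 m2 m3
      have hmx : G.Adj m x := SimpleGraph.dist_eq_one_iff_adj.mp dmx
      have hmy1 : G.Adj m y₁ := SimpleGraph.dist_eq_one_iff_adj.mp dmy1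
      have s5 := dist_step hG hmx a
      have s6 := dist_step hG hmy1 a
      have cy1a : G.dist a y₁ = G.dist y₁ a := SimpleGraph.dist_comm
      have cam : G.dist a m = G.dist m a := SimpleGraph.dist_comm
      have cbm : G.dist b m = G.dist m b := SimpleGraph.dist_comm
      have dma : G.dist m a = k := by clear * - s5 s6 cxa dxa cy1a dy1a cam hk0; omega
      clear s5 s6
      have hy1 : y₁ ∈ side G a b := by rw [mem_side]; clear * - dy1a dy1b; omega
      have hmem : m ∈ side G b a := by rw [mem_side]; clear * - dma dbm cbm; omega
      obtain ⟨hchain, hchar⟩ := IH (k - 1) (by clear * - hk0; omega) y₁ m hmy1.symm hy1 hmem (by clear * - dy1a hk0; omega)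
      have hmy : m ≠ y := by intro hE; rw [hE] at dbm; clear * - dbm cyb hy hk; omega
      have hy1x : y₁ ≠ x := fun hE => hxy1 hE.symm
      have sq : SquareOpposite G s(y₁, m) s(y, x) :=
        ⟨y₁, m, y, x, hmy1.symm.ne, h.ne.symm, hy1x, hmy, hmx.ne, hyx.ne,
          hmy1.symm, hyx, h.symm, hmx, rfl, rfl⟩
      refine ⟨Relation.EqvGen.trans _ _ _ hchain (Relation.EqvGen.rel _ _ sq),
        fun w => ?_⟩
      rw [hchar w]
      exact square_transfer hG hmy1.symm hyx h.symm hmx hmy hy1x w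

lemma so_symm {u v : Sym2 V} (h : SquareOpposite G u v) : SquareOpposite G v u := by
  obtain ⟨p, q, r, t, h1, h2, h3, h4, h5, h6, a1, a2, a3, a4, e1, e2⟩ := h
  exact ⟨r, t, p, q, h6, h2.symm, h4.symm, h3.symm, h5.symm, h1,
    a2, a1, a3.symm, a4.symm, e2, e1⟩

/-- A cut edge for the split determined by the edge `ab`. -/
def IsCut (G : SimpleGraph V) (a b : V) (f : Sym2 V) : Prop :=
  ∃ y x, f = s(y, x) ∧ G.Adj y x ∧ y ∈ side G a b ∧ x ∈ side G b a

lemma cut_of_so (hG : MedianGraph G) {a b : V} (hab : G.Adj a b) {u v : Sym2 V}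
    (h : SquareOpposite G u v) (hu : IsCut G a b u) : IsCut G a b v := by
  obtain ⟨p, q, r, t, h1, h2, h3, h4, h5, h6, apq, art, apr, aqt, rfl, rfl⟩ := h
  obtain ⟨y, x, hE, hyx, hy, hx⟩ := hu
  have drq2 : G.dist r q = 2 := dist_eq_two hG apr.symm apq h4.symm
  have dtp2 : G.dist t p = 2 := dist_eq_two hG aqt.symm apq.symm h3.symm
  have drp : G.dist r p = 1 := SimpleGraph.dist_eq_one_iff_adj.mpr apr.symm
  have dtq : G.dist t q = 1 := SimpleGraph.dist_eq_one_iff_adj.mpr aqt.symm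
  rcases Sym2.eq_iff.mp hE with ⟨hp, hq⟩ | ⟨hp, hq⟩
  · rw [← hp] at hy; rw [← hq] at hx
    have hchar := (cut_key hG hab (G.dist p a) p q apq hy hx rfl).2
    have hr : r ∈ side G a b := (hchar r).mpr (by omega)
    have ht : t ∈ side G b a := by
      rcases side_or hG hab t with ht | ht
      · have := (hchar t).mp ht; omega
      · exact ht
    exact ⟨r, t, rfl, art, hr, ht⟩
  · rw [← hp] at hx; rw [← hq] at hy
    have hchar := (cut_key hG hab (G.dist q a) q p apq.symm hy hx rfl).2
    have ht : t ∈ side G a b := (hchar t).mpr (by omega)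
    have hr : r ∈ side G b a := by
      rcases side_or hG hab r with hr | hr
      · have := (hchar r).mp hr; omega
      · exact hr
    exact ⟨t, r, Sym2.eq_swap, art.symm, ht, hr⟩

lemma mem_class_cut (hG : MedianGraph G) {a b : V} (hab : G.Adj a b) {f : Sym2 V}
    (h : Relation.EqvGen (SquareOpposite G) s(a, b) f) : IsCut G a b f := by
  have daa : G.dist a a = 0 := SimpleGraph.dist_self
  have dbb : G.dist b b = 0 := SimpleGraph.dist_self
  have dab : G.dist a b = 1 := SimpleGraph.dist_eq_one_iff_adj.mpr hab
  have dba : G.dist b a = 1 := SimpleGraph.dist_eq_one_iff_adj.mpr hab.symm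
  have base : IsCut G a b s(a, b) :=
    ⟨a, b, rfl, hab, by rw [mem_side]; omega, by rw [mem_side]; omega⟩
  have key : ∀ u v : Sym2 V, Relation.EqvGen (SquareOpposite G) u v →
      (IsCut G a b u ↔ IsCut G a b v) := by
    intro u v h
    induction h with
    | rel _ _ hr => exact ⟨cut_of_so hG hab hr, cut_of_so hG hab (so_symm hr)⟩
    | refl _ => exact Iff.rfl
    | symm _ _ _ ih => exact ih.symm
    | trans _ _ _ _ _ ih1 ih2 => exact ih1.trans ih2
  exact (key _ _ h).mp base

lemma geo_supp (hG : MedianGraph G) {a b : V} (hab : G.Adj a b) :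
    ∀ {u v : V} (p : G.Walk u v), p.length = G.dist u v →
      u ∈ side G a b → v ∈ side G a b → ∀ z ∈ p.support, z ∈ side G a b := by
  intro u v p
  induction p with
  | nil =>
    intro _ hu _ z hz
    rw [SimpleGraph.Walk.support_nil, List.mem_singleton] at hz
    exact hz ▸ hu
  | @cons u y v hadj q ih =>
    intro hlen hu hv z hz
    rw [SimpleGraph.Walk.length_cons] at hlen
    have hq : q.length = G.dist y v := by
      have h1 : G.dist y v ≤ q.length := SimpleGraph.dist_le q
      have h2 : G.dist u v ≤ G.dist u y + G.dist y v := hG.1.dist_triangle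
      have h3 : G.dist u y = 1 := SimpleGraph.dist_eq_one_iff_adj.mpr hadj
      omega
    have hy : y ∈ side G a b := by
      rcases side_or hG hab y with hy | hy
      · exact hy
      · exfalso
        obtain ⟨-, hchar⟩ := cut_key hG hab (G.dist u a) u y hadj hu hy rfl
        have hvv := (hchar v).mp hv
        have c1 : G.dist v y = G.dist y v := SimpleGraph.dist_comm
        have c2 : G.dist v u = G.dist u v := SimpleGraph.dist_comm
        clear * - hvv c1 c2 hlen hq
        omega
    rw [SimpleGraph.Walk.support_cons] at hz
    rcases List.mem_cons.mp hz with rfl | hz2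
    · exact hu
    · exact ih hq hy hv z hz2

lemma reach_of_supp {S : Set V} {H : Set (Sym2 V)}
    (hS : ∀ ⦃x y : V⦄, G.Adj x y → x ∈ S → y ∈ S → s(x, y) ∉ H) :
    ∀ {u v : V} (p : G.Walk u v), (∀ z ∈ p.support, z ∈ S) →
      (G.deleteEdges H).Reachable u v := by
  intro u v p
  induction p with
  | nil => exact fun _ => SimpleGraph.Reachable.refl _
  | @cons u y v hadj q ih =>
    intro hsupp
    have hu : u ∈ S := hsupp u (SimpleGraph.Walk.start_mem_support _)
    have hy : y ∈ S := hsupp y (by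
      rw [SimpleGraph.Walk.support_cons]
      exact List.mem_cons_of_mem _ (SimpleGraph.Walk.start_mem_support q))
    have hrest : ∀ z ∈ q.support, z ∈ S := fun z hz => hsupp z (by
      rw [SimpleGraph.Walk.support_cons]
      exact List.mem_cons_of_mem _ hz)
    have hadj' : (G.deleteEdges H).Adj u y := by
      rw [SimpleGraph.deleteEdges_adj]
      exact ⟨hadj, hS hadj hu hy⟩
    exact hadj'.reachable.trans (ih hrest)

lemma walk_end_side (hG : MedianGraph G) {a b : V} (hab : G.Adj a b) {H : Set (Sym2 V)}
    (hcut : ∀ y x : V, G.Adj y x → y ∈ side G a b → x ∈ side G b a → s(y, x) ∈ H) :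
    ∀ {u v : V}, (G.deleteEdges H).Walk u v → u ∈ side G a b → v ∈ side G a b := by
  intro u v p
  induction p with
  | nil => exact id
  | @cons u y v hadj q ih =>
    intro hu
    rw [SimpleGraph.deleteEdges_adj] at hadj
    rcases side_or hG hab y with hy | hy
    · exact ih hy
    · exact absurd (hcut u y hadj.1 hu hy) hadj.2

end HypAux

/-- Deleting the edges of a hyperplane of a median graph yields exactly two connected
components, whose vertex sets (the halfspaces) are convex. -/
theorem hyperplane_two_convex_halfspaces {V : Type*} (G : SimpleGraph V)
    (hG : MedianGraph G) (H : Set (Sym2 V)) (hH : IsHyperplane G H) :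
    (∃ c₁ c₂ : (G.deleteEdges H).ConnectedComponent,
        c₁ ≠ c₂ ∧ ∀ c : (G.deleteEdges H).ConnectedComponent, c = c₁ ∨ c = c₂) ∧
      ∀ c : (G.deleteEdges H).ConnectedComponent, ConvexSet G c.supp := by
  open HypAux in
  obtain ⟨e, he, rfl⟩ := hH
  revert he
  induction e using Sym2.ind with
  | _ a b =>
  intro he
  rw [SimpleGraph.mem_edgeSet] at he
  have hconn := hG.1
  have daa : G.dist a a = 0 := SimpleGraph.dist_self
  have dbb : G.dist b b = 0 := SimpleGraph.dist_self
  have dab : G.dist a b = 1 := SimpleGraph.dist_eq_one_iff_adj.mpr he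
  have dba : G.dist b a = 1 := SimpleGraph.dist_eq_one_iff_adj.mpr he.symm
  have ha : a ∈ HypAux.side G a b := by rw [HypAux.mem_side]; omega
  have hb : b ∈ HypAux.side G b a := by rw [HypAux.mem_side]; omega
  set Hs : Set (Sym2 V) := {f | Relation.EqvGen (SquareOpposite G) s(a, b) f}
    with hHsdef
  have hcut : ∀ y x : V, G.Adj y x → y ∈ HypAux.side G a b → x ∈ HypAux.side G b a →
      s(y, x) ∈ Hs :=
    fun y x h1 h2 h3 => (cut_key hG he (G.dist y a) y x h1 h2 h3 rfl).1
  have hcut' : ∀ y x : V, G.Adj y x → y ∈ HypAux.side G b a → x ∈ HypAux.side G a b →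
      s(y, x) ∈ Hs := by
    intro y x h1 h2 h3
    have h0 := (cut_key hG he.symm (G.dist y b) y x h1 h2 h3 rfl).1
    have hsw : s(b, a) = s(a, b) := Sym2.eq_swap
    rw [hsw] at h0
    exact h0
  have hnotH : ∀ ⦃x y : V⦄, G.Adj x y → x ∈ HypAux.side G a b → y ∈ HypAux.side G a b →
      s(x, y) ∉ Hs := by
    intro x y h1 h2 h3 hm
    obtain ⟨y', x', hE, -, hy', hx'⟩ := mem_class_cut hG he hm
    rcases Sym2.eq_iff.mp hE with ⟨h4, h5⟩ | ⟨h4, h5⟩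
    · exact side_disj h3 (h5.symm ▸ hx')
    · exact side_disj h2 (h4.symm ▸ hx')
  have hnotH' : ∀ ⦃x y : V⦄, G.Adj x y → x ∈ HypAux.side G b a → y ∈ HypAux.side G b a →
      s(x, y) ∉ Hs := by
    intro x y h1 h2 h3 hm
    obtain ⟨y', x', hE, -, hy', hx'⟩ := mem_class_cut hG he hm
    rcases Sym2.eq_iff.mp hE with ⟨h4, h5⟩ | ⟨h4, h5⟩
    · exact side_disj (h4.symm ▸ hy') h2
    · exact side_disj (h5.symm ▸ hy') h3
  have hreach : ∀ u v : V, u ∈ HypAux.side G a b → v ∈ HypAux.side G a b →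
      (G.deleteEdges Hs).Reachable u v := by
    intro u v hu hv
    obtain ⟨p, hp⟩ := hconn.exists_walk_length_eq_dist u v
    exact reach_of_supp hnotH p (geo_supp hG he p hp hu hv)
  have hreach' : ∀ u v : V, u ∈ HypAux.side G b a → v ∈ HypAux.side G b a →
      (G.deleteEdges Hs).Reachable u v := by
    intro u v hu hv
    obtain ⟨p, hp⟩ := hconn.exists_walk_length_eq_dist u v
    exact reach_of_supp hnotH' p (geo_supp hG he.symm p hp hu hv)
  have hstay : ∀ u v : V, (G.deleteEdges Hs).Reachable u v → u ∈ HypAux.side G a b →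
      v ∈ HypAux.side G a b := by
    intro u v hr hu
    obtain ⟨p⟩ := hr
    exact walk_end_side hG he hcut p hu
  have hstay' : ∀ u v : V, (G.deleteEdges Hs).Reachable u v → u ∈ HypAux.side G b a →
      v ∈ HypAux.side G b a := by
    intro u v hr hu
    obtain ⟨p⟩ := hr
    exact walk_end_side hG he.symm hcut' p hu
  have hsupp1 : ((G.deleteEdges Hs).connectedComponentMk a).supp = HypAux.side G a b := by
    ext v
    rw [SimpleGraph.ConnectedComponent.mem_supp_iff]
    constructor
    · intro hEq
      exact hstay a v (SimpleGraph.ConnectedComponent.eq.mp hEq).symm ha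
    · intro hv
      exact SimpleGraph.ConnectedComponent.sound (hreach v a hv ha)
  have hsupp2 : ((G.deleteEdges Hs).connectedComponentMk b).supp = HypAux.side G b a := by
    ext v
    rw [SimpleGraph.ConnectedComponent.mem_supp_iff]
    constructor
    · intro hEq
      exact hstay' b v (SimpleGraph.ConnectedComponent.eq.mp hEq).symm hb
    · intro hv
      exact SimpleGraph.ConnectedComponent.sound (hreach' v b hv hb)
  constructor
  · refine ⟨(G.deleteEdges Hs).connectedComponentMk a,
      (G.deleteEdges Hs).connectedComponentMk b, ?_, ?_⟩
    · intro hEq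
      exact side_disj (hstay a b (SimpleGraph.ConnectedComponent.eq.mp hEq) ha) hb
    · intro c
      obtain ⟨v, rfl⟩ := c.exists_rep
      rcases side_or hG he v with hv | hv
      · exact Or.inl (SimpleGraph.ConnectedComponent.sound (hreach v a hv ha))
      · exact Or.inr (SimpleGraph.ConnectedComponent.sound (hreach' v b hv hb))
  · intro c
    obtain ⟨v, rfl⟩ := c.exists_rep
    rcases side_or hG he v with hv | hv
    · show ConvexSet G ((G.deleteEdges Hs).connectedComponentMk v).supp
      rw [SimpleGraph.ConnectedComponent.sound (hreach v a hv ha), hsupp1]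
      intro u hu w hw p hlen z hz
      exact geo_supp hG he p hlen hu hw z hz
    · show ConvexSet G ((G.deleteEdges Hs).connectedComponentMk v).supp
      rw [SimpleGraph.ConnectedComponent.sound (hreach' v b hv hb), hsupp2]
      intro u hu w hw p hlen z hz
      exact geo_supp hG he.symm p hlen hu hw z hz
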